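/- Let 0 < s < d and ρ > 0. Then the supremum of ‖(|·|^{s−d}) * g‖_{L^∞(ℝ^d)} over all measurable g with 0 ≤ g ≤ 1 and ∫_{ℝ^d} g = (2π)^d ρ equals (|S^{d−1}|/s) · c_TF^{s/2} · ρ^{s/d}, where c_TF = 4π² (d/|S^{d−1}|)^{2/d}, and the supremum is attained by the indicator function of the ball of radius c_TF^{1/2} ρ^{1/d}. -/

import Mathlib

open Real MeasureTheory Set

open scoped ENNReal in
lemma aux_lintegral_norm {E : Type*} [NormedAddCommGroup E] [NormedSpace ℝ E]
    [MeasurableSpace E] [BorelSpace E] [FiniteDimensional ℝ E] [Nontrivial E]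
    (μ : Measure E) [μ.IsAddHaarMeasure] (f : ℝ → ℝ≥0∞) (hf : Measurable f) :
    ∫⁻ x, f ‖x‖ ∂μ = μ.toSphere univ *
      ∫⁻ r in Ioi (0:ℝ), ENNReal.ofReal (r ^ (Module.finrank ℝ E - 1)) * f r := by
  have h0 : MeasurableSet ({(0:E)}ᶜ) := (measurableSet_singleton 0).compl
  have hg : Measurable fun r : Ioi (0:ℝ) => f ↑r := hf.comp measurable_subtype_coe
  have hdens : Measurable fun r : Ioi (0:ℝ) =>
      ENNReal.ofReal (r.1 ^ (Module.finrank ℝ E - 1)) :=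
    (measurable_subtype_coe.pow_const _).ennreal_ofReal
  calc ∫⁻ x, f ‖x‖ ∂μ
      = ∫⁻ x : ({(0:E)}ᶜ : Set E), f ‖x.1‖ ∂(μ.comap (↑)) := by
        rw [lintegral_subtype_comap h0 (fun x => f ‖x‖), restrict_compl_singleton]
    _ = ∫⁻ p : Metric.sphere (0:E) 1 × Ioi (0:ℝ), f p.2
          ∂(μ.toSphere.prod (.volumeIoiPow (Module.finrank ℝ E - 1))) :=
        by
          have h := μ.measurePreserving_homeomorphUnitSphereProd.lintegral_comp
            ((hf.comp measurable_subtype_coe).comp measurable_snd)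
          simpa [Function.comp_apply, homeomorphUnitSphereProd_apply_snd_coe, div_one] using h
    _ = μ.toSphere univ *
          ∫⁻ r : Ioi (0:ℝ), f r ∂(Measure.volumeIoiPow (Module.finrank ℝ E - 1)) := by
        rw [lintegral_prod (fun p : Metric.sphere (0:E) 1 × Ioi (0:ℝ) => f p.2)
          (hg.comp measurable_snd).aemeasurable]
        simp [lintegral_const, mul_comm]
    _ = μ.toSphere univ *
          ∫⁻ r : Ioi (0:ℝ), ENNReal.ofReal (r.1 ^ (Module.finrank ℝ E - 1)) * f r
            ∂((volume : Measure ℝ).comap (↑)) := by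
        rw [Measure.volumeIoiPow, lintegral_withDensity_eq_lintegral_mul _ hdens hg]
        rfl
    _ = _ := by
        rw [lintegral_subtype_comap measurableSet_Ioi
          (fun r : ℝ => ENNReal.ofReal (r ^ (Module.finrank ℝ E - 1)) * f r)]

open scoped ENNReal in
lemma aux_integrableOn_rpow_ball {E : Type*} [NormedAddCommGroup E] [NormedSpace ℝ E]
    [MeasurableSpace E] [BorelSpace E] [FiniteDimensional ℝ E] [Nontrivial E]
    (μ : Measure E) [μ.IsAddHaarMeasure] {t R : ℝ}
    (ht : -(Module.finrank ℝ E : ℝ) < t) (ht0 : t < 0) (hR : 0 < R) :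
    IntegrableOn (fun y : E => ‖y‖ ^ t) (Metric.ball (0:E) R) μ := by
  set n : ℕ := Module.finrank ℝ E - 1 with hn
  have hfr : 0 < Module.finrank ℝ E := Module.finrank_pos
  have hnc : (n : ℝ) = (Module.finrank ℝ E : ℝ) - 1 := by
    rw [hn, Nat.cast_sub hfr]; norm_num
  have hmeas : Measurable (fun y : E => ‖y‖ ^ t) :=
    measurable_norm.pow measurable_const
  rw [← integrable_indicator_iff measurableSet_ball]
  constructor
  · exact (hmeas.indicator measurableSet_ball).aestronglyMeasurable
  · rw [hasFiniteIntegral_iff_ofReal (ae_of_all _ fun x =>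
      indicator_nonneg (fun y _ => rpow_nonneg (norm_nonneg y) t) x)]
    have heq : (fun x : E =>
        ENNReal.ofReal ((Metric.ball (0:E) R).indicator (fun y => ‖y‖ ^ t) x))
        = fun x : E =>
          (fun r : ℝ => ENNReal.ofReal ((Iio R).indicator (fun r => r ^ t) r)) ‖x‖ := by
      funext x
      by_cases hx : ‖x‖ < R <;>
        simp [indicator, mem_ball_zero_iff, hx]
    have hFmeas : Measurable fun r : ℝ =>
        ENNReal.ofReal ((Iio R).indicator (fun r => r ^ t) r) :=
      (((measurable_id.pow measurable_const)).indicator measurableSet_Iio).ennreal_ofReal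
    rw [heq, aux_lintegral_norm μ _ hFmeas]
    have h1 : μ.toSphere univ < ⊤ := by
      rw [Measure.toSphere_apply_univ]
      exact ENNReal.mul_lt_top (by simp) measure_ball_lt_top
    refine ENNReal.mul_lt_top h1 ?_
    have hint : IntegrableOn (fun r : ℝ => r ^ (t + n)) (Ioo 0 R) volume := by
      have h2 : IntervalIntegrable (fun r : ℝ => r ^ (t + n)) volume 0 R :=
        intervalIntegral.intervalIntegrable_rpow' (by rw [hnc]; linarith)
      exact ((intervalIntegrable_iff_integrableOn_Ioo_of_le hR.le).mp h2)
    have hbound : ∫⁻ r in Ioi (0:ℝ),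
        ENNReal.ofReal (r ^ n) * ENNReal.ofReal ((Iio R).indicator (fun r => r ^ t) r)
        ≤ ∫⁻ r, (Ioo (0:ℝ) R).indicator
            (fun r => ENNReal.ofReal (r ^ (t + n))) r := by
      refine le_trans (setLIntegral_mono' measurableSet_Ioi fun r hr => ?_)
        (setLIntegral_le_lintegral _ _)
      have hr0 : (0:ℝ) < r := hr
      by_cases hrR : r < R
      · have : r ∈ Ioo (0:ℝ) R := ⟨hr0, hrR⟩
        rw [indicator_of_mem (by simpa using hrR), indicator_of_mem this,
          ← ENNReal.ofReal_mul (by positivity)]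
        apply le_of_eq
        congr 1
        rw [← Real.rpow_natCast r n, ← Real.rpow_add hr0]
        ring_nf
      · rw [indicator_of_notMem (by simpa using hrR),
          indicator_of_notMem (fun hmem => hrR hmem.2)]
        simp
    refine lt_of_le_of_lt hbound ?_
    rw [lintegral_indicator measurableSet_Ioo]
    exact hint.lintegral_lt_top

open scoped ENNReal in
lemma aux_integral_rpow_ball {E : Type*} [NormedAddCommGroup E] [NormedSpace ℝ E]
    [MeasurableSpace E] [BorelSpace E] [FiniteDimensional ℝ E] [Nontrivial E]
    (μ : Measure E) [μ.IsAddHaarMeasure] {t R : ℝ}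
    (ht : -(Module.finrank ℝ E : ℝ) < t) (ht0 : t < 0) (hR : 0 < R) :
    ∫ y in Metric.ball (0:E) R, ‖y‖ ^ t ∂μ =
      (Module.finrank ℝ E) * (μ (Metric.ball (0:E) 1)).toReal *
        (R ^ (t + Module.finrank ℝ E) / (t + Module.finrank ℝ E)) := by
  set D : ℕ := Module.finrank ℝ E with hD
  have hfr : 0 < D := Module.finrank_pos
  have htD : (0:ℝ) < t + D := by push_cast; linarith
  set f : ℝ → ℝ := fun r => (Iio R).indicator (fun r => r ^ t) r with hf
  have h1 : ∫ y in Metric.ball (0:E) R, ‖y‖ ^ t ∂μ = ∫ x, f ‖x‖ ∂μ := by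
    rw [← integral_indicator measurableSet_ball]
    congr 1
    funext x
    by_cases hx : ‖x‖ < R <;> simp [hf, indicator, mem_ball_zero_iff, hx]
  have h2 : ∫ r in Ioi (0:ℝ), r ^ (D - 1) • f r = R ^ (t + D) / (t + D) := by
    calc ∫ r in Ioi (0:ℝ), r ^ (D - 1) • f r
        = ∫ r in Ioi (0:ℝ), (Iio R).indicator (fun r => r ^ (D - 1) * r ^ t) r := by
          refine setIntegral_congr_fun measurableSet_Ioi fun r hr => ?_
          by_cases h : r < R <;> simp [hf, indicator, h, smul_eq_mul]
      _ = ∫ r in Ioi (0:ℝ) ∩ Iio R, r ^ (D - 1) * r ^ t := by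
          rw [setIntegral_indicator measurableSet_Iio]
      _ = ∫ r in Ioo (0:ℝ) R, r ^ (t + (D:ℝ) - 1) := by
          rw [Ioi_inter_Iio]
          refine setIntegral_congr_fun measurableSet_Ioo fun r hr => ?_
          rw [← Real.rpow_natCast r (D - 1), ← Real.rpow_add hr.1]
          congr 1
          rw [Nat.cast_sub hfr]
          push_cast; ring
      _ = ∫ r in (0:ℝ)..R, r ^ (t + (D:ℝ) - 1) := by
          rw [intervalIntegral.integral_of_le hR.le,
            Measure.restrict_congr_set Ioo_ae_eq_Ioc.symm]
      _ = R ^ (t + D) / (t + D) := by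
          rw [integral_rpow (Or.inl (by push_cast; linarith))]
          rw [Real.zero_rpow (by linarith)]
          ring_nf
  rw [h1, MeasureTheory.integral_fun_norm_addHaar μ f, ← hD, h2]
  simp [nsmul_eq_mul, smul_eq_mul]
  rw [measureReal_def]
  ring

/-- Lemma (estimate on `w * g`): for `0 < s < d` and `ρ > 0`, the supremum of
`‖|·|^(s-d) * g‖_{L^∞}` over measurable `0 ≤ g ≤ 1` with `∫ g = (2π)^d ρ` equals
`(|S^(d-1)|/s) c_TF^(s/2) ρ^(s/d)` with `c_TF = 4π²(d/|S^(d-1)|)^(2/d)`, and is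
attained by the indicator of the ball of radius `c_TF^(1/2) ρ^(1/d)` (at the
point `k = 0`). Here `|S^(d-1)| = d · vol(B(0,1))`. -/
theorem sup_convolution_riesz
    (d : ℕ) (hd : 1 ≤ d) (s ρ : ℝ) (hs0 : 0 < s) (hsd : s < d) (hρ : 0 < ρ)
    (Sd cTF : ℝ)
    (hSd : Sd = d * (volume (Metric.ball (0 : EuclideanSpace ℝ (Fin d)) 1)).toReal)
    (hcTF : cTF = 4 * π ^ 2 * (d / Sd) ^ ((2 : ℝ) / d)) :
    (∀ g : EuclideanSpace ℝ (Fin d) → ℝ, Measurable g →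
      (∀ y, 0 ≤ g y ∧ g y ≤ 1) →
      (∫ y, g y) = (2 * π) ^ d * ρ →
      ∀ k : EuclideanSpace ℝ (Fin d),
        (∫ y, ‖k - y‖ ^ (s - d) * g y) ≤ Sd / s * cTF ^ (s / 2) * ρ ^ (s / d)) ∧
    (∫ y in Metric.ball (0 : EuclideanSpace ℝ (Fin d)) (cTF ^ ((1 : ℝ)/2) * ρ ^ ((1 : ℝ)/d)),
        ‖y‖ ^ (s - d)) = Sd / s * cTF ^ (s / 2) * ρ ^ (s / d) := by
  set E := EuclideanSpace ℝ (Fin d) with hE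
  have hfrk : Module.finrank ℝ E = d := finrank_euclideanSpace_fin
  haveI : Nontrivial E := by
    refine Module.nontrivial_of_finrank_pos (R := ℝ) ?_
    rw [hfrk]; omega
  have hd0 : (0:ℝ) < d := by exact_mod_cast hd
  have hdne : (d:ℝ) ≠ 0 := ne_of_gt hd0
  set ω : ℝ := (volume (Metric.ball (0 : E) 1)).toReal with hω
  have hωpos : 0 < ω := by
    rw [hω]
    exact ENNReal.toReal_pos (ne_of_gt (Metric.measure_ball_pos _ _ one_pos))
      measure_ball_lt_top.ne
  have hSdpos : 0 < Sd := by rw [hSd]; positivity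
  have hcTFpos : 0 < cTF := by
    rw [hcTF]
    have : 0 < (d / Sd : ℝ) := by positivity
    positivity
  set R : ℝ := cTF ^ ((1 : ℝ)/2) * ρ ^ ((1 : ℝ)/d) with hRdef
  have hR : 0 < R := mul_pos (rpow_pos_of_pos hcTFpos _) (rpow_pos_of_pos hρ _)
  have hts : -(d:ℝ) < s - d := by linarith
  have hts0 : s - d < 0 := by linarith
  -- R ^ s
  have hRs : R ^ s = cTF ^ (s / 2) * ρ ^ (s / d) := by
    rw [hRdef, Real.mul_rpow (rpow_nonneg hcTFpos.le _) (rpow_nonneg hρ.le _),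
      ← Real.rpow_mul hcTFpos.le, ← Real.rpow_mul hρ.le]
    rw [show (1:ℝ)/2 * s = s / 2 by ring, show (1:ℝ)/d * s = s / d by ring]
  -- cTF ^ (d/2)
  have hcTFd : cTF ^ ((d:ℝ)/2) = (2*π)^d * (d / Sd) := by
    rw [hcTF, Real.mul_rpow (by positivity) (rpow_nonneg (by positivity) _),
      ← Real.rpow_mul (by positivity : (0:ℝ) ≤ (d:ℝ)/Sd)]
    rw [show (2:ℝ)/d * ((d:ℝ)/2) = 1 by field_simp, Real.rpow_one]
    congr 1
    rw [show (4 : ℝ) * π ^ 2 = (2*π)^2 by ring, ← Real.rpow_natCast (2*π) 2,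
      ← Real.rpow_mul (by positivity), show ((2:ℕ):ℝ) * ((d:ℝ)/2) = (d:ℝ) by push_cast; ring,
      Real.rpow_natCast]
  -- R ^ d
  have hRd : R ^ (d:ℝ) = (2*π)^d * (d / Sd) * ρ := by
    rw [hRdef, Real.mul_rpow (rpow_nonneg hcTFpos.le _) (rpow_nonneg hρ.le _),
      ← Real.rpow_mul hcTFpos.le, ← Real.rpow_mul hρ.le,
      show (1:ℝ)/2 * d = (d:ℝ)/2 by ring, show (1:ℝ)/d * d = 1 by field_simp,
      Real.rpow_one, hcTFd]
  -- measure of balls of radius R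
  have hVol : ∀ k : E, (volume (Metric.ball k R)).toReal = (2*π)^d * ρ := by
    intro k
    rw [Measure.addHaar_ball volume k hR.le, hfrk, ENNReal.toReal_mul,
      ENNReal.toReal_ofReal (by positivity), ← hω, ← Real.rpow_natCast R d, hRd, hSd]
    field_simp
  -- the value of the ball integral
  have key2 : (∫ y in Metric.ball (0 : E) R, ‖y‖ ^ (s - d))
      = Sd / s * cTF ^ (s / 2) * ρ ^ (s / d) := by
    rw [aux_integral_rpow_ball volume (by rw [hfrk]; exact hts) hts0 hR, hfrk]
    rw [show s - (d:ℝ) + d = s by ring, hRs, ← hω, hSd]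
    ring
  refine ⟨?_, key2⟩
  -- Part 1
  intro g hgmeas hg01 hgint k
  set w : E → ℝ := fun y => ‖k - y‖ ^ (s - d) with hw
  have hwmeas : Measurable w := (measurable_const.sub measurable_id).norm.pow measurable_const
  have hwnonneg : ∀ y, 0 ≤ w y := fun y => rpow_nonneg (norm_nonneg _) _
  have hgIntble : Integrable g := by
    by_contra hni
    rw [integral_undef hni] at hgint
    have : (0:ℝ) < (2*π)^d * ρ := by positivity
    linarith [hgint ▸ this]
  -- integrability of w on balls around k
  have hwball : ∀ r : ℝ, 0 < r → IntegrableOn w (Metric.ball k r) := by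
    intro r hr
    have hmp : MeasurePreserving (fun y : E => k - y) volume volume :=
      ⟨measurable_const.sub measurable_id, Measure.map_sub_left_eq_self volume k⟩
    have hemb : MeasurableEmbedding (fun y : E => k - y) :=
      (MeasurableEquiv.subLeft k).measurableEmbedding
    have hpre : (fun y : E => k - y) ⁻¹' (Metric.ball 0 r) = Metric.ball k r := by
      ext y
      rw [mem_preimage, mem_ball_zero_iff, norm_sub_rev, Metric.mem_ball, dist_eq_norm]
    have := (hmp.integrableOn_comp_preimage hemb
      (f := fun z : E => ‖z‖ ^ (s - d)) (s := Metric.ball 0 r)).mpr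
      (aux_integrableOn_rpow_ball volume (by rw [hfrk]; exact hts) hts0 hr)
    rwa [hpre] at this
  -- integrability of w * g
  have hwg : Integrable (fun y => w y * g y) := by
    refine Integrable.mono'
      (((hwball 1 one_pos).integrable_indicator measurableSet_ball).add hgIntble)
      (hwmeas.mul hgmeas).aestronglyMeasurable (ae_of_all _ fun y => ?_)
    rw [Real.norm_eq_abs, abs_of_nonneg (mul_nonneg (hwnonneg y) (hg01 y).1)]
    by_cases hy1 : y ∈ Metric.ball k 1
    · have h1 : w y * g y ≤ w y := mul_le_of_le_one_right (hwnonneg y) (hg01 y).2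
      simp only [Pi.add_apply, Set.indicator_of_mem hy1]
      linarith [(hg01 y).1]
    · have hnorm : 1 ≤ ‖k - y‖ := by
        rw [norm_sub_rev]
        have h := (by simpa [Metric.mem_ball] using hy1 : 1 ≤ dist y k)
        rwa [dist_eq_norm] at h
      have hw1 : w y ≤ 1 := Real.rpow_le_one_of_one_le_of_nonpos hnorm hts0.le
      have : w y * g y ≤ g y := mul_le_of_le_one_left (hg01 y).1 hw1
      simp only [Pi.add_apply, Set.indicator_of_notMem hy1]
      linarith
  -- indicator integrals
  have hIndInt : Integrable ((Metric.ball k R).indicator w) :=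
    (hwball R hR).integrable_indicator measurableSet_ball
  have hInd1Int : Integrable ((Metric.ball k R).indicator (fun _ => (1:ℝ))) :=
    (integrableOn_const measure_ball_lt_top.ne).integrable_indicator
      measurableSet_ball
  have hInd1 : (∫ y, (Metric.ball k R).indicator (fun _ => (1:ℝ)) y) = (2*π)^d * ρ := by
    rw [integral_indicator_const (1:ℝ) measurableSet_ball, smul_eq_mul, mul_one, measureReal_def, hVol k]
  set c : ℝ := R ^ (s - d) with hc
  -- a.e. pointwise inequality
  have hae : ∀ᵐ y : E, w y * g y - (Metric.ball k R).indicator w y - c * g y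
      + c * (Metric.ball k R).indicator (fun _ => (1:ℝ)) y ≤ 0 := by
    have hknull : ∀ᵐ y : E, y ≠ k := by
      rw [ae_iff]
      simpa using measure_singleton (μ := (volume : Measure E)) k
    filter_upwards [hknull] with y hy
    have hrw : w y * g y - (Metric.ball k R).indicator w y - c * g y
        + c * (Metric.ball k R).indicator (fun _ => (1:ℝ)) y
        = (w y - c) * (g y - (Metric.ball k R).indicator (fun _ => (1:ℝ)) y) := by
      by_cases hmem : y ∈ Metric.ball k R <;>
        simp [Set.indicator_of_mem, Set.indicator_of_notMem, hmem] <;> ring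
    rw [hrw]
    by_cases hmem : y ∈ Metric.ball k R
    · have h1 : 0 < ‖k - y‖ := by
        rw [norm_pos_iff]
        exact sub_ne_zero_of_ne (Ne.symm hy)
      have h2 : ‖k - y‖ ≤ R := by
        rw [norm_sub_rev]
        have h := (by simpa [Metric.mem_ball] using hmem : dist y k < R)
        rw [dist_eq_norm] at h
        exact le_of_lt h
      have hcw : c ≤ w y := Real.rpow_le_rpow_of_nonpos h1 h2 hts0.le
      refine mul_nonpos_of_nonneg_of_nonpos (by linarith) ?_
      simp only [Set.indicator_of_mem hmem]
      linarith [(hg01 y).2]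
    · have h2 : R ≤ ‖k - y‖ := by
        rw [norm_sub_rev]
        have h := (by simpa [Metric.mem_ball] using hmem : R ≤ dist y k)
        rwa [dist_eq_norm] at h
      have hwc : w y ≤ c := Real.rpow_le_rpow_of_nonpos hR h2 hts0.le
      refine mul_nonpos_of_nonpos_of_nonneg (by linarith) ?_
      simp only [Set.indicator_of_notMem hmem]
      linarith [(hg01 y).1]
  have hle0 : (∫ y, (w y * g y - (Metric.ball k R).indicator w y - c * g y
      + c * (Metric.ball k R).indicator (fun _ => (1:ℝ)) y)) ≤ 0 :=
    integral_nonpos_of_ae hae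
  have hB : Integrable (fun y => (Metric.ball k R).indicator w y) := hIndInt
  have hC : Integrable (fun y => c * g y) := hgIntble.const_mul c
  have hD : Integrable (fun y => c * (Metric.ball k R).indicator (fun _ => (1:ℝ)) y) :=
    hInd1Int.const_mul c
  have hAB : Integrable (fun y => w y * g y - (Metric.ball k R).indicator w y) := hwg.sub hB
  have hABC : Integrable
      (fun y => w y * g y - (Metric.ball k R).indicator w y - c * g y) := hAB.sub hC
  rw [integral_add hABC hD, integral_sub hAB hC, integral_sub hwg hB,
    integral_const_mul, integral_const_mul, hgint, hInd1] at hle0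
  -- translate the indicator integral
  have htrans : (∫ y, (Metric.ball k R).indicator w y)
      = ∫ y in Metric.ball (0:E) R, ‖y‖ ^ (s - d) := by
    have heq : (fun y : E => (Metric.ball k R).indicator w y)
        = fun y : E => ((Metric.ball (0:E) R).indicator (fun z => ‖z‖ ^ (s - d))) (k - y) := by
      funext y
      by_cases hmem : y ∈ Metric.ball k R
      · have : k - y ∈ Metric.ball (0:E) R := by
          rw [mem_ball_zero_iff, norm_sub_rev]
          have h := (by simpa [Metric.mem_ball] using hmem : dist y k < R)
          rwa [dist_eq_norm] at h
        simp [Set.indicator_of_mem, hmem, this, hw]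
      · have : k - y ∉ Metric.ball (0:E) R := by
          rw [mem_ball_zero_iff, norm_sub_rev]
          have h := (by simpa [Metric.mem_ball] using hmem : R ≤ dist y k)
          rw [dist_eq_norm] at h
          exact not_lt.mpr h
        simp [Set.indicator_of_notMem, hmem, this]
    rw [heq, integral_sub_left_eq_self _ volume k, integral_indicator measurableSet_ball]
  have : (∫ y, w y * g y) ≤ ∫ y, (Metric.ball k R).indicator w y := by linarith
  calc (∫ y, ‖k - y‖ ^ (s - d) * g y) = ∫ y, w y * g y := rfl
    _ ≤ ∫ y, (Metric.ball k R).indicator w y := this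
    _ = ∫ y in Metric.ball (0:E) R, ‖y‖ ^ (s - d) := htrans
    _ = Sd / s * cTF ^ (s / 2) * ρ ^ (s / d) := key2
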